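/- Let M be the star with countably many branches, with metric d₂([x,m],[y,n]) = |x − y| if m = n and x + y otherwise, and define g : M → ℝ by g([x,n]) = n · x (well-defined on the quotient). Then g is geodesically convex on (M, d₂): for every geodesic γ from p to q and every t ∈ [0,1], g(γ(t)) ≤ (1 − t) g(p) + t g(q). -/

import Mathlib

/-- Points of `[0,1] × ℕ≥1`: countably many copies of the unit interval. -/
abbrev StarPoint : Type := Set.Icc (0:ℝ) 1 × {n : ℕ // 1 ≤ n}

/-- The gluing relation: `(x,m) ∼ (y,n) ↔ (x = y = 0) ∨ (x = y ∧ m = n)`. -/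
def starSetoid : Setoid StarPoint where
  r a b := (a.1.1 = 0 ∧ b.1.1 = 0) ∨ (a.1.1 = b.1.1 ∧ a.2 = b.2)
  iseqv := by
    constructor
    · intro a; exact Or.inr ⟨rfl, rfl⟩
    · rintro a b (⟨h1, h2⟩ | ⟨h1, h2⟩)
      · exact Or.inl ⟨h2, h1⟩
      · exact Or.inr ⟨h1.symm, h2.symm⟩
    · rintro a b c (⟨h1, h2⟩ | ⟨h1, h2⟩) (⟨g1, g2⟩ | ⟨g1, g2⟩)
      · exact Or.inl ⟨h1, g2⟩
      · exact Or.inl ⟨h1, g1 ▸ h2⟩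
      · exact Or.inl ⟨h1.trans g1, g2⟩
      · exact Or.inr ⟨h1.trans g1, h2.trans g2⟩

/-- The star with countably many branches: the quotient of `[0,1] × ℕ≥1` gluing all the
origins together. -/
def StarSpace : Type := Quotient starSetoid

/-- The distance `d₂((x,m),(y,n)) = |x-y|` if `m = n`, and `x + y` otherwise. -/
noncomputable def d2 (a b : StarPoint) : ℝ :=
  if a.2 = b.2 then |a.1.1 - b.1.1| else a.1.1 + b.1.1

lemma d2_self (a : StarPoint) : d2 a a = 0 := by
  unfold d2; rw [if_pos rfl, sub_self, abs_zero]

lemma d2_comm (a b : StarPoint) : d2 a b = d2 b a := by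
  unfold d2
  rcases eq_or_ne a.2 b.2 with h | h
  · rw [if_pos h, if_pos h.symm, abs_sub_comm]
  · rw [if_neg h, if_neg (Ne.symm h), add_comm]

lemma d2_triangle (a b c : StarPoint) : d2 a c ≤ d2 a b + d2 b c := by
  obtain ⟨⟨x, hx0, hx1⟩, m⟩ := a
  obtain ⟨⟨y, hy0, hy1⟩, n⟩ := b
  obtain ⟨⟨z, hz0, hz1⟩, k⟩ := c
  unfold d2
  dsimp only
  rcases eq_or_ne m n with hmn | hmn <;> rcases eq_or_ne n k with hnk | hnk
  · subst hmn; subst hnk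
    rw [if_pos rfl, if_pos rfl, if_pos rfl]
    exact abs_sub_le x y z
  · subst hmn
    rw [if_neg hnk, if_pos rfl, if_neg hnk]
    have := le_abs_self (x - y); linarith
  · subst hnk
    rw [if_neg hmn, if_neg hmn, if_pos rfl]
    have := le_abs_self (z - y); rw [abs_sub_comm] at this; linarith
  · rcases eq_or_ne m k with hmk | hmk
    · subst hmk
      rw [if_pos rfl, if_neg hmn, if_neg hnk]
      have h0 : |x - z| ≤ x + z := by
        rw [abs_sub_le_iff]; constructor <;> linarith
      linarith
    · rw [if_neg hmk, if_neg hmn, if_neg hnk]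
      linarith

lemma d2_rel_of_eq_zero {a b : StarPoint} (h : d2 a b = 0) : starSetoid.r a b := by
  unfold d2 at h
  split_ifs at h with hab
  · have : a.1.1 - b.1.1 = 0 := abs_eq_zero.mp h
    exact Or.inr ⟨by linarith, hab⟩
  · have h1 : 0 ≤ a.1.1 := a.1.2.1
    have h2 : 0 ≤ b.1.1 := b.1.2.1
    exact Or.inl ⟨by linarith, by linarith⟩

lemma d2_of_fst_eq_zero {a : StarPoint} (b : StarPoint) (ha : a.1.1 = 0) :
    d2 a b = b.1.1 := by
  unfold d2
  split_ifs with h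
  · rw [ha, zero_sub, abs_neg, abs_of_nonneg b.1.2.1]
  · rw [ha, zero_add]

lemma d2_congr_left {a₁ a₂ : StarPoint} (b : StarPoint) (h : starSetoid.r a₁ a₂) :
    d2 a₁ b = d2 a₂ b := by
  rcases h with ⟨h1, h2⟩ | ⟨h1, h2⟩
  · rw [d2_of_fst_eq_zero b h1, d2_of_fst_eq_zero b h2]
  · have : a₁ = a₂ := Prod.ext (Subtype.ext h1) h2
    rw [this]

/-- `d₂` descends to the quotient. -/
noncomputable def starDist2 : StarSpace → StarSpace → ℝ :=
  Quotient.lift₂ d2 (fun a₁ b₁ a₂ b₂ ha hb => by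
    calc d2 a₁ b₁ = d2 a₂ b₁ := d2_congr_left b₁ ha
    _ = d2 b₁ a₂ := d2_comm _ _
    _ = d2 b₂ a₂ := d2_congr_left a₂ hb
    _ = d2 a₂ b₂ := d2_comm _ _)

/-- The star with countably many branches, as a metric space for `d₂`. -/
noncomputable instance StarSpace.metricSpace : MetricSpace StarSpace where
  dist := starDist2
  dist_self := by
    rintro ⟨a⟩; exact d2_self a
  dist_comm := by
    rintro ⟨a⟩ ⟨b⟩; exact d2_comm a b
  dist_triangle := by
    rintro ⟨a⟩ ⟨b⟩ ⟨c⟩; exact d2_triangle a b c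
  eq_of_dist_eq_zero := by
    rintro ⟨a⟩ ⟨b⟩ h
    exact Quotient.sound (d2_rel_of_eq_zero h)

/-- The class of a point of `[0,1] × ℕ≥1` in the star. -/
def StarSpace.mk (a : StarPoint) : StarSpace := Quotient.mk starSetoid a

lemma StarSpace.dist_mk (a b : StarPoint) :
    dist (StarSpace.mk a) (StarSpace.mk b) = d2 a b := rfl

/-- The origin of the star: the common class of the points `(0, n)`. -/
def StarSpace.origin : StarSpace := StarSpace.mk (⟨0, by norm_num⟩, ⟨1, le_refl 1⟩)

/-- A geodesic from `p` to `q` in a metric space, parametrized by `[0,1]`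
(proportionally to arclength). -/
def IsGeodesic {X : Type*} [MetricSpace X] (p q : X) (γ : Set.Icc (0:ℝ) 1 → X) : Prop :=
  γ ⟨0, by norm_num⟩ = p ∧ γ ⟨1, by norm_num⟩ = q ∧
    ∀ s t : Set.Icc (0:ℝ) 1, dist (γ s) (γ t) = |(s:ℝ) - (t:ℝ)| * dist p q

/-- Geodesic convexity for a real-valued function on a metric space. -/
def GeodesicallyConvexReal {X : Type*} [MetricSpace X] (f : X → ℝ) : Prop :=
  ∀ (p q : X) (γ : Set.Icc (0:ℝ) 1 → X), IsGeodesic p q γ →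
    ∀ t : Set.Icc (0:ℝ) 1, f (γ t) ≤ (1 - (t:ℝ)) * f p + (t:ℝ) * f q

/-- The function `g [x, n] = n · x`, well-defined on the quotient. -/
def starG : StarSpace → ℝ :=
  Quotient.lift (fun a : StarPoint => (a.2.1 : ℝ) * a.1.1) (by
    rintro a b (⟨h1, h2⟩ | ⟨h1, h2⟩) <;> try dsimp only
    · rw [h1, h2, mul_zero, mul_zero]
    · rw [h1, h2])

/-- The function `g [x,n] = n · x` is geodesically convex on the star
with countably many branches equipped with the metric `d₂`. -/
theorem starG_geodesicallyConvex_d2 : GeodesicallyConvexReal starG := by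
  rintro p q γ ⟨h0, h1, hd⟩ ⟨t, ht0, ht1⟩
  have hzp : dist (γ ⟨t, ht0, ht1⟩) p = t * dist p q := by
    have h := hd ⟨t, ht0, ht1⟩ ⟨0, by norm_num⟩
    rw [h0] at h
    simpa [abs_of_nonneg ht0] using h
  have hzq : dist (γ ⟨t, ht0, ht1⟩) q = (1 - t) * dist p q := by
    have h := hd ⟨t, ht0, ht1⟩ ⟨1, by norm_num⟩
    rw [h1] at h
    rw [h, show |t - (1:ℝ)| = 1 - t by rw [abs_of_nonpos (by linarith)]; ring]
  obtain ⟨⟨⟨x, hx0, hx1⟩, k⟩, hz⟩ := Quotient.exists_rep (γ ⟨t, ht0, ht1⟩)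
  obtain ⟨⟨⟨xp, hp0, hp1⟩, m⟩, hp⟩ := Quotient.exists_rep p
  obtain ⟨⟨⟨xq, hq0, hq1⟩, n⟩, hq⟩ := Quotient.exists_rep q
  rw [← hz, ← hp, ← hq] at hzp hzq ⊢
  have hzp' : d2 (⟨⟨x, hx0, hx1⟩, k⟩ : StarPoint) ⟨⟨xp, hp0, hp1⟩, m⟩
      = t * d2 (⟨⟨xp, hp0, hp1⟩, m⟩ : StarPoint) ⟨⟨xq, hq0, hq1⟩, n⟩ := hzp
  have hzq' : d2 (⟨⟨x, hx0, hx1⟩, k⟩ : StarPoint) ⟨⟨xq, hq0, hq1⟩, n⟩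
      = (1 - t) * d2 (⟨⟨xp, hp0, hp1⟩, m⟩ : StarPoint) ⟨⟨xq, hq0, hq1⟩, n⟩ := hzq
  show (k.1 : ℝ) * x ≤ (1 - t) * ((m.1 : ℝ) * xp) + t * ((n.1 : ℝ) * xq)
  clear hzp hzq hz hp hq h0 h1 hd
  unfold d2 at hzp' hzq'
  dsimp only at hzp' hzq'
  have hk : (1:ℝ) ≤ (k.1 : ℝ) := by exact_mod_cast k.2
  have hm : (1:ℝ) ≤ (m.1 : ℝ) := by exact_mod_cast m.2
  have hn : (1:ℝ) ≤ (n.1 : ℝ) := by exact_mod_cast n.2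
  rcases eq_or_ne m n with hmn | hmn
  · subst hmn
    rw [if_pos rfl] at hzp' hzq'
    rcases eq_or_ne k m with hkm | hkm
    · subst hkm
      rw [if_pos rfl] at hzp' hzq'
      have hk0 : (0:ℝ) ≤ (k.1 : ℝ) := by linarith
      rcases abs_cases (x - xp) with ⟨e1, _⟩ | ⟨e1, _⟩ <;>
        rcases abs_cases (x - xq) with ⟨e2, _⟩ | ⟨e2, _⟩ <;>
        rcases abs_cases (xp - xq) with ⟨e3, _⟩ | ⟨e3, _⟩ <;>
        rw [e1] at hzp' <;> rw [e3] at hzp' hzq' <;> rw [e2] at hzq' <;>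
        [skip; skip; skip; skip; skip; skip; skip; skip] <;>
        · have key : x ≤ (1 - t) * xp + t * xq := by linarith
          nlinarith [mul_le_mul_of_nonneg_left key hk0]
    · rw [if_neg hkm] at hzp' hzq'
      have habs : |xp - xq| ≤ xp + xq := by
        rcases abs_cases (xp - xq) with ⟨e, _⟩ | ⟨e, _⟩ <;> rw [e] <;> linarith
      have hx : x ≤ 0 := by linarith
      have hx' : x = 0 := le_antisymm hx hx0
      rw [hx', mul_zero]
      have h4 := mul_nonneg (mul_nonneg (sub_nonneg.mpr ht1) (by linarith : (0:ℝ) ≤ (m.1:ℝ))) hp0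
      have h5 := mul_nonneg (mul_nonneg ht0 (by linarith : (0:ℝ) ≤ (m.1:ℝ))) hq0
      linarith
  · rw [if_neg hmn] at hzp' hzq'
    rcases eq_or_ne k m with hkm | hkm
    · subst hkm
      have hkn : k ≠ n := hmn
      rw [if_neg hkn] at hzq'
      clear hzp'
      have hk0 : (0:ℝ) ≤ (k.1 : ℝ) := by linarith
      have key : x ≤ (1 - t) * xp := by linarith [mul_nonneg ht0 hq0]
      have h2 := mul_le_mul_of_nonneg_left key hk0
      have h3 : 0 ≤ t * ((n.1:ℝ) * xq) :=
        mul_nonneg ht0 (mul_nonneg (by linarith : (0:ℝ) ≤ (n.1:ℝ)) hq0)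
      nlinarith [h2, h3]
    · rw [if_neg hkm] at hzp'
      rcases eq_or_ne k n with hkn | hkn
      · subst hkn
        clear hzq'
        have hk0 : (0:ℝ) ≤ (k.1 : ℝ) := by linarith
        have key : x ≤ t * xq := by linarith [mul_nonneg (sub_nonneg.mpr ht1) hp0]
        have h2 := mul_le_mul_of_nonneg_left key hk0
        have h3 : 0 ≤ (1 - t) * ((m.1:ℝ) * xp) :=
          mul_nonneg (sub_nonneg.mpr ht1) (mul_nonneg (by linarith : (0:ℝ) ≤ (m.1:ℝ)) hp0)
        nlinarith [h2, h3]
      · rw [if_neg hkn] at hzq'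
        have hx' : x = 0 := by linarith
        rw [hx', mul_zero]
        have h4 := mul_nonneg (mul_nonneg (sub_nonneg.mpr ht1) (by linarith : (0:ℝ) ≤ (m.1:ℝ))) hp0
        have h5 := mul_nonneg (mul_nonneg ht0 (by linarith : (0:ℝ) ≤ (n.1:ℝ))) hq0
        linarith
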